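/- Let m ≥ 1 and let t, j be integers with 0 ≤ j < t ≤ m-1. For n ≥ 0 let a_n denote the number of Deutsch paths of length n from height t to height j all of whose heights h_i satisfy 0 ≤ h_i ≤ m-1. Then in the formal power series ring ℤ[[v]], the series S = Σ_{n≥0} a_n · vⁿ · ((1+v+v²)⁻¹)ⁿ (which converges since the n-th summand has order ≥ n) satisfies S · (1-v) · (1-v^{m+2}) · (1+v)^{j+2} = (1+v)^{t} · (1-v^{j+1}) · v · (1-v^{m-t}) · (1+v+v²). -/

import Mathlib

open PowerSeries Finset

/-- The power series `1 + v + v²` over `ℤ`. -/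
noncomputable def q : PowerSeries ℤ := 1 + X + X ^ 2

/-- `v · (1+v+v²)⁻¹` as a formal power series over `ℤ`. -/
noncomputable def w : PowerSeries ℤ := X * PowerSeries.invOfUnit q 1

/-- `p` is a Deutsch path of length `n`: each step is either an up-step `+1`
or a down-step of arbitrary (negative) size. -/
def IsDeutschPath (n : ℕ) (p : Fin (n + 1) → ℤ) : Prop :=
  ∀ i : Fin n, p i.succ - p i.castSucc = 1 ∨ p i.succ - p i.castSucc ≤ -1

/-- Number of Deutsch paths of length `n` from height `a` to height `b`
all of whose heights satisfy the predicate `P`. -/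
noncomputable def pathCount (n : ℕ) (a b : ℤ) (P : ℤ → Prop) : ℕ :=
  Nat.card {p : Fin (n + 1) → ℤ //
    p 0 = a ∧ p (Fin.last n) = b ∧ (∀ i, P (p i)) ∧ IsDeutschPath n p}

/-- The power series `Σ_{n≥0} a_n · vⁿ · ((1+v+v²)⁻¹)ⁿ`.  Since the `n`-th
summand has order `≥ n`, its coefficient of `v^N` is the (finite) sum of the
corresponding coefficients of the summands with `n ≤ N`. -/
noncomputable def series (a : ℕ → ℕ) : PowerSeries ℤ :=
  PowerSeries.mk fun N => ∑ n ∈ range (N + 1), (a n : ℤ) * coeff N (w ^ n)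

lemma constantCoeff_q : constantCoeff q = 1 := by
  simp [q]

lemma q_mul_inv : q * PowerSeries.invOfUnit q 1 = 1 :=
  PowerSeries.mul_invOfUnit q 1 (by simp [constantCoeff_q])

lemma w_mul_q : w * q = X := by
  rw [w, mul_assoc, mul_comm (PowerSeries.invOfUnit q 1) q, q_mul_inv, mul_one]

lemma q_add_X : q + X = (1 + X) ^ 2 := by
  rw [q]; ring

lemma coeff_w_pow_eq_zero {N n : ℕ} (h : N < n) : coeff N (w ^ n) = 0 := by
  rw [w, mul_pow, PowerSeries.coeff_mul]
  apply Finset.sum_eq_zero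
  rintro ⟨i, k⟩ hik
  rw [Finset.HasAntidiagonal.mem_antidiagonal] at hik
  rw [PowerSeries.coeff_X_pow]
  have : i ≠ n := by omega
  simp [this]

lemma coeff_series (a : ℕ → ℕ) (N : ℕ) :
    coeff N (series a) = ∑ n ∈ range (N + 1), (a n : ℤ) * coeff N (w ^ n) := by
  simp [series, PowerSeries.coeff_mk]

lemma coeff_w_mul_series (a : ℕ → ℕ) (N : ℕ) :
    coeff N (w * series a) = ∑ n ∈ range (N + 1), (a n : ℤ) * coeff N (w ^ (n + 1)) := by
  rw [PowerSeries.coeff_mul]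
  have key : ∀ p ∈ Finset.HasAntidiagonal.antidiagonal N,
      coeff p.1 w * coeff p.2 (series a) =
      ∑ n ∈ range (N + 1), (a n : ℤ) * (coeff p.1 w * coeff p.2 (w ^ n)) := by
    rintro ⟨i, k⟩ hik
    rw [Finset.HasAntidiagonal.mem_antidiagonal] at hik
    rw [coeff_series, Finset.mul_sum]
    rw [← Finset.sum_subset (Finset.range_subset_range.2 (by omega : k + 1 ≤ N + 1))]
    · exact Finset.sum_congr rfl fun n _ => by ring
    · intro n _ hn
      rw [Finset.mem_range, not_lt] at hn
      simp [coeff_w_pow_eq_zero (show k < n by omega)]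
  rw [Finset.sum_congr rfl key, Finset.sum_comm]
  refine Finset.sum_congr rfl fun n _ => ?_
  rw [← Finset.mul_sum, pow_succ', PowerSeries.coeff_mul]

lemma series_shift (a : ℕ → ℕ) :
    series a = C (a 0 : ℤ) + w * series (fun n => a (n + 1)) := by
  ext N
  rw [map_add, coeff_series, coeff_w_mul_series, PowerSeries.coeff_C]
  rw [Finset.sum_range_succ']
  have h0 : (a 0 : ℤ) * coeff N (w ^ 0) = if N = 0 then (a 0 : ℤ) else 0 := by
    rw [pow_zero, PowerSeries.coeff_one]
    split <;> simp
  rw [h0, Finset.sum_range_succ, coeff_w_pow_eq_zero (by omega), mul_zero, add_zero,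
    add_comm]

lemma series_sum {ι : Type*} (s : Finset ι) (f : ι → ℕ → ℕ) :
    series (fun n => ∑ c ∈ s, f c n) = ∑ c ∈ s, series (f c) := by
  ext N
  rw [coeff_series, map_sum]
  have : ∀ c ∈ s, coeff N (series (f c)) =
      ∑ n ∈ range (N + 1), ((f c n : ℤ)) * coeff N (w ^ n) := fun c _ => coeff_series _ _
  rw [Finset.sum_congr rfl this, Finset.sum_comm]
  refine Finset.sum_congr rfl fun n _ => ?_
  push_cast
  rw [Finset.sum_mul]


section counting

variable (M : ℤ)

abbrev Pm (M : ℤ) : ℤ → Prop := fun x => 0 ≤ x ∧ x ≤ M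

open scoped Classical in
lemma pathCount_zero (a b : ℤ) (P : ℤ → Prop) :
    pathCount 0 a b P = if a = b ∧ P a then 1 else 0 := by
  rw [pathCount]
  split
  · rename_i h
    have : Unique {p : Fin 1 → ℤ //
        p 0 = a ∧ p (Fin.last 0) = b ∧ (∀ i, P (p i)) ∧ IsDeutschPath 0 p} := by
      refine ⟨⟨⟨fun _ => a, rfl, h.1.symm ▸ rfl, fun _ => h.2, fun i => i.elim0⟩⟩, ?_⟩
      rintro ⟨p, h0, _⟩
      ext i
      have : i = 0 := Subsingleton.elim _ _
      simp [this, h0]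
    exact Nat.card_unique
  · rename_i h
    have : IsEmpty {p : Fin 1 → ℤ //
        p 0 = a ∧ p (Fin.last 0) = b ∧ (∀ i, P (p i)) ∧ IsDeutschPath 0 p} := by
      refine ⟨?_⟩
      rintro ⟨p, h0, hl, hP, -⟩
      have hab : a = b := by rw [← h0, ← hl]; rfl
      exact h ⟨hab, h0 ▸ hP 0⟩
    exact Nat.card_of_isEmpty

lemma pathFinite (n : ℕ) (a b : ℤ) :
    Finite {p : Fin (n + 1) → ℤ //
      p 0 = a ∧ p (Fin.last n) = b ∧ (∀ i, Pm M (p i)) ∧ IsDeutschPath n p} := by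
  apply Finite.of_injective
    (fun p (i : Fin (n + 1)) => (⟨p.1 i, Finset.mem_Icc.2 (p.2.2.2.1 i)⟩ : (Finset.Icc (0:ℤ) M)))
  intro p1 p2 h
  ext i
  exact congrArg Subtype.val (congrFun h i)

lemma pathCount_succ (n : ℕ) (a b : ℤ) (hb : Pm M b) :
    pathCount (n + 1) a b (Pm M) =
      ∑ c ∈ (Finset.Icc (0:ℤ) M).filter (fun c => b - c = 1 ∨ b - c ≤ -1),
        pathCount n a c (Pm M) := by
  classical
  set fs := (Finset.Icc (0:ℤ) M).filter (fun c => b - c = 1 ∨ b - c ≤ -1) with hfs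
  set S := {p : Fin (n + 2) → ℤ //
      p 0 = a ∧ p (Fin.last (n + 1)) = b ∧ (∀ i, Pm M (p i)) ∧ IsDeutschPath (n + 1) p} with hS
  have hmem : ∀ p : S, p.1 ((Fin.last n).castSucc) ∈ fs := by
    rintro ⟨p, h0, hl, hP, hD⟩
    rw [hfs, Finset.mem_filter, Finset.mem_Icc]
    refine ⟨hP _, ?_⟩
    have := hD (Fin.last n)
    rwa [Fin.succ_last, hl] at this
  set f : S → ↥fs := fun p => ⟨p.1 ((Fin.last n).castSucc), hmem p⟩ with hf
  have e1 : S ≃ Σ c : ↥fs, {p : S // f p = c} := (Equiv.sigmaFiberEquiv f).symm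
  have e2 : ∀ c : ↥fs, {p : S // f p = c} ≃
      {p : Fin (n + 1) → ℤ //
        p 0 = a ∧ p (Fin.last n) = (c : ℤ) ∧ (∀ i, Pm M (p i)) ∧ IsDeutschPath n p} := by
    intro c
    refine ⟨fun p => ⟨p.1.1 ∘ Fin.castSucc, ?_, ?_, ?_, ?_⟩,
      fun p => ⟨⟨Fin.snoc p.1 b, ?_, ?_, ?_, ?_⟩, ?_⟩, ?_, ?_⟩
    · show p.1.1 (Fin.castSucc 0) = a
      rw [Fin.castSucc_zero]; exact p.1.2.1
    · show p.1.1 ((Fin.last n).castSucc) = (c : ℤ)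
      exact congrArg Subtype.val p.2
    · exact fun i => p.1.2.2.2.1 _
    · intro i
      have := p.1.2.2.2.2 i.castSucc
      simp only [Fin.succ_castSucc] at this
      exact this
    · rw [show (0 : Fin (n + 2)) = Fin.castSucc 0 from (Fin.castSucc_zero).symm,
        Fin.snoc_castSucc]
      exact p.2.1
    · exact Fin.snoc_last _ _
    · intro i
      induction i using Fin.lastCases with
      | last => rw [Fin.snoc_last]; exact hb
      | cast i => rw [Fin.snoc_castSucc]; exact p.2.2.2.1 i
    · intro i
      induction i using Fin.lastCases with
      | last =>
        simp only [Fin.succ_last, Fin.snoc_last, Fin.snoc_castSucc, p.2.2.1]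
        exact (Finset.mem_filter.1 c.2).2
      | cast i =>
        simp only [Fin.succ_castSucc, Fin.snoc_castSucc]
        exact p.2.2.2.2 i
    · exact Subtype.ext (by simp [hf, Fin.snoc_castSucc, p.2.2.1])
    · rintro ⟨⟨p, h0, hl, hP, hD⟩, hpc⟩
      apply Subtype.ext
      apply Subtype.ext
      show Fin.snoc (p ∘ Fin.castSucc) b = p
      funext i
      induction i using Fin.lastCases with
      | last => rw [Fin.snoc_last, hl]
      | cast i => rw [Fin.snoc_castSucc]; rfl
    · rintro ⟨p, h0, hl, hP, hD⟩
      apply Subtype.ext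
      funext i
      simp [Fin.snoc_castSucc]
  have hfin : ∀ c : ↥fs, Finite {p : S // f p = c} := fun c =>
    @Finite.of_equiv _ _ (pathFinite M n a c) (e2 c).symm
  haveI : ∀ c : ↥fs, Fintype {p : S // f p = c} := fun c =>
    @Fintype.ofFinite _ (hfin c)
  calc Nat.card S = Nat.card (Σ c : ↥fs, {p : S // f p = c}) := Nat.card_congr e1
    _ = ∑ c : ↥fs, Nat.card {p : S // f p = c} := by
        rw [Nat.card_eq_fintype_card, Fintype.card_sigma]
        exact Finset.sum_congr rfl fun c _ => (Nat.card_eq_fintype_card).symm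
    _ = ∑ c : ↥fs, pathCount n a (c : ℤ) (Pm M) :=
        Finset.sum_congr rfl fun c _ => Nat.card_congr (e2 c)
    _ = ∑ c ∈ fs, pathCount n a c (Pm M) := Finset.sum_coe_sort fs (fun x => pathCount n a x (Pm M))

end counting


noncomputable def Fs (m t h : ℕ) : PowerSeries ℤ :=
  series (fun n => pathCount n (t : ℤ) (h : ℤ) (Pm ((m : ℤ) - 1)))

noncomputable def Ts (m t h : ℕ) : PowerSeries ℤ := ∑ c ∈ Finset.Ico h m, Fs m t c

lemma X_ne : (X : PowerSeries ℤ) ≠ 0 := by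
  intro h
  simpa using congrArg (coeff 1) h

lemma one_add_X_ne : (1 + X : PowerSeries ℤ) ≠ 0 := by
  intro h
  simpa using congrArg (constantCoeff) h

lemma one_sub_X_ne : (1 - X : PowerSeries ℤ) ≠ 0 := by
  intro h
  simpa using congrArg (constantCoeff) h

lemma Ts_zero (m t h : ℕ) (h1 : m ≤ h) : Ts m t h = 0 := by
  rw [Ts, Finset.Ico_eq_empty (by omega), Finset.sum_empty]

lemma Ts_split (m t h : ℕ) (h1 : h < m) : Ts m t h = Fs m t h + Ts m t (h + 1) := by
  rw [Ts, Ts, Finset.sum_eq_sum_Ico_succ_bot h1]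

lemma qF_eq (m t h : ℕ) (htm : t + 1 ≤ m) (hh : h < m) :
    q * Fs m t h = (if h = t then q else 0) +
      X * ((if h = 0 then 0 else Fs m t (h - 1)) + Ts m t (h + 1)) := by
  classical
  have hshift := series_shift (fun n => pathCount n (t:ℤ) (h:ℤ) (Pm ((m:ℤ)-1)))
  have h0 : pathCount 0 (t:ℤ) (h:ℤ) (Pm ((m:ℤ)-1)) = if h = t then 1 else 0 := by
    by_cases hht : h = t
    · have hcond : ((t:ℤ) = (h:ℤ) ∧ Pm ((m:ℤ)-1) (t:ℤ)) :=
        ⟨by exact_mod_cast hht.symm, by omega, by push_cast; omega⟩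
      rw [pathCount_zero, if_pos hcond, if_pos hht]
    · have hcond : ¬((t:ℤ) = (h:ℤ) ∧ Pm ((m:ℤ)-1) (t:ℤ)) := fun hc =>
        hht (by exact_mod_cast hc.1.symm)
      rw [pathCount_zero, if_neg hcond, if_neg hht]
  have hsucc : (fun n => pathCount (n+1) (t:ℤ) (h:ℤ) (Pm ((m:ℤ)-1))) =
      fun n => ∑ c ∈ (Finset.Icc (0:ℤ) ((m:ℤ)-1)).filter
        (fun c => (h:ℤ) - c = 1 ∨ (h:ℤ) - c ≤ -1),
        pathCount n (t:ℤ) c (Pm ((m:ℤ)-1)) :=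
    funext fun n => pathCount_succ ((m:ℤ)-1) n _ _ ⟨by omega, by push_cast; omega⟩
  rw [hsucc, series_sum] at hshift
  have hset : (Finset.Icc (0:ℤ) ((m:ℤ)-1)).filter
        (fun c => (h:ℤ) - c = 1 ∨ (h:ℤ) - c ≤ -1) =
      (Finset.Ico (h-1) h ∪ Finset.Ico (h+1) m).map
        ⟨Nat.cast, Nat.cast_injective⟩ := by
    ext c
    simp only [Finset.mem_filter, Finset.mem_Icc, Finset.mem_map, Finset.mem_union,
      Finset.mem_Ico, Function.Embedding.coeFn_mk]
    constructor
    · rintro ⟨⟨h1, h2⟩, h3⟩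
      exact ⟨c.toNat, by omega, by omega⟩
    · rintro ⟨k, hk, rfl⟩
      refine ⟨⟨by omega, by push_cast; omega⟩, by omega⟩
  rw [hset, Finset.sum_map] at hshift
  have hico : ∑ k ∈ Finset.Ico (h-1) h,
      series (fun n => pathCount n (t:ℤ) ((k : ℕ) : ℤ) (Pm ((m:ℤ)-1))) =
      (if h = 0 then 0 else Fs m t (h - 1)) := by
    by_cases h0' : h = 0
    · subst h0'
      rw [if_pos rfl, Finset.Ico_eq_empty (by omega), Finset.sum_empty]
    · have : Finset.Ico (h-1) h = {h-1} := by
        ext k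
        simp only [Finset.mem_Ico, Finset.mem_singleton]
        omega
      rw [if_neg h0', this, Finset.sum_singleton]
      rfl
  have hsum : ∑ k ∈ Finset.Ico (h-1) h ∪ Finset.Ico (h+1) m,
      series (fun n => pathCount n (t:ℤ) ((k : ℕ) : ℤ) (Pm ((m:ℤ)-1))) =
      (if h = 0 then 0 else Fs m t (h - 1)) + Ts m t (h + 1) := by
    rw [Finset.sum_union (by
      simp only [Finset.disjoint_left, Finset.mem_Ico]
      omega), hico]
    rfl
  simp only [Function.Embedding.coeFn_mk] at hshift
  rw [hsum] at hshift
  rw [Fs, hshift, h0, mul_add]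
  congr 1
  · by_cases hht : h = t
    · rw [if_pos hht, if_pos hht]
      simp
    · rw [if_neg hht, if_neg hht]
      simp
  · rw [← mul_assoc, mul_comm q w, w_mul_q]

lemma hrec0 (m t : ℕ) (ht : 1 ≤ t) (htm : t + 1 ≤ m) :
    q * Ts m t 0 = (1 + X) ^ 2 * Ts m t 1 := by
  have e := qF_eq m t 0 htm (by omega)
  rw [if_neg (by omega), if_pos rfl] at e
  have s0 := Ts_split m t 0 (by omega)
  have hqx : (1 + X : PowerSeries ℤ) ^ 2 = q + X := by rw [q]; ring
  linear_combination e + q * s0 - Ts m t 1 * hqx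

lemma hrec (m t h : ℕ) (htm : t + 1 ≤ m) (hm2 : h + 2 ≤ m) :
    (1 + X) ^ 2 * Ts m t (h + 2) =
      (1 + X) ^ 2 * Ts m t (h + 1) - X * Ts m t h - (if h + 1 = t then q else 0) := by
  have e := qF_eq m t (h + 1) htm (by omega)
  rw [if_neg (Nat.succ_ne_zero h)] at e
  simp only [Nat.add_sub_cancel] at e
  have s1 := Ts_split m t (h + 1) (by omega)
  have s0 := Ts_split m t h (by omega)
  have hqx : (1 + X : PowerSeries ℤ) ^ 2 = q + X := by rw [q]; ring
  linear_combination (Ts m t (h + 2) - Ts m t (h + 1)) * hqx - e - q * s1 + X * s0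

lemma lower (m t : ℕ) (hm : 1 ≤ m) (ht : 1 ≤ t) (htm : t + 1 ≤ m) :
    ∀ h, h ≤ t → (1 + X) ^ h * (1 - X ^ 2) * Ts m t h = (1 - X ^ (h + 2)) * Ts m t 0 := by
  intro h
  induction h using Nat.strong_induction_on with
  | _ h ih =>
    match h with
    | 0 => intro _; ring
    | 1 =>
      intro h1t
      have h0 := hrec0 m t ht htm
      have hq' : q = 1 + X + X ^ 2 := rfl
      apply mul_left_cancel₀ one_add_X_ne
      linear_combination (X ^ 2 - 1) * h0 + (1 - X ^ 2) * Ts m t 0 * hq'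
    | (h + 2) =>
      intro h2t
      have ih0 := ih h (by omega) (by omega)
      have ih1 := ih (h + 1) (by omega) (by omega)
      have rec' := hrec m t h htm (by omega)
      rw [if_neg (by omega)] at rec'
      linear_combination ((1 + X) ^ h * (1 - X ^ 2)) * rec' + (1 + X) * ih1 - X * ih0

lemma upper (m t : ℕ) (htm : t + 1 ≤ m) :
    ∀ k h, t ≤ h → h + 1 ≤ m → m - (h + 1) ≤ k →
      (1 + X) * (X ^ h - X ^ m) * Ts m t (h + 1) = (X ^ (h + 1) - X ^ m) * Ts m t h := by
  intro k
  induction k with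
  | zero =>
    intro h h1 h2 h3
    have hm : m = h + 1 := by omega
    subst hm
    rw [Ts_zero _ _ _ (le_refl _)]
    ring
  | succ k ihk =>
    intro h h1 h2 h3
    by_cases he : m = h + 1
    · subst he
      rw [Ts_zero _ _ _ (le_refl _)]
      ring
    · have R1 := ihk (h + 1) (by omega) (by omega) (by omega)
      have rec' := hrec m t h htm (by omega)
      rw [if_neg (by omega)] at rec'
      apply mul_left_cancel₀ X_ne
      linear_combination (1 + X) * R1 - (X ^ (h + 1) - X ^ m) * rec'

theorem stmt0 (m t j : ℕ) (hm : 1 ≤ m) (hjt : j < t) (htm : t ≤ m - 1) :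
    (series fun n => pathCount n t j (fun x => 0 ≤ x ∧ x ≤ (m : ℤ) - 1)) *
        (1 - X) * (1 - X ^ (m + 2)) * (1 + X) ^ (j + 2) =
      (1 + X) ^ t * (1 - X ^ (j + 1)) * X * (1 - X ^ (m - t)) * q := by
  obtain ⟨s, rfl⟩ : ∃ s, t = s + 1 := ⟨t - 1, by omega⟩
  have htm' : s + 2 ≤ m := by omega
  have hq' : q = 1 + X + X ^ 2 := rfl
  have P0 := lower m (s + 1) hm (by omega) htm' s (by omega)
  have P1 := lower m (s + 1) hm (by omega) htm' (s + 1) le_rfl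
  have Pj := lower m (s + 1) hm (by omega) htm' j (by omega)
  have Pj1 := lower m (s + 1) hm (by omega) htm' (j + 1) (by omega)
  have R := upper m (s + 1) htm' m (s + 1) le_rfl htm' (by omega)
  have rec' := hrec m (s + 1) s htm' (by omega)
  rw [if_pos rfl] at rec'
  have hxm : (X : PowerSeries ℤ) ^ m = X ^ (s + 1) * X ^ (m - (s + 1)) := by
    rw [← pow_add]
    congr 1
    omega
  have E' : (1 - X ^ (m + 2)) * (1 - X) * X ^ (s + 1) * Ts m (s + 1) 0 =
      q * (X ^ (s + 1) - X ^ m) * (1 + X) ^ (s + 1) * (1 - X) := by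
    linear_combination (-((X ^ (s + 1) - X ^ m) * (1 - X ^ 2) * (1 + X) ^ s)) * rec' +
      ((1 - X ^ 2) * (1 + X) ^ (s + 1)) * R +
      (-(X * (X ^ s - X ^ m))) * P1 + (X * (X ^ (s + 1) - X ^ m)) * P0
  have hcan : (X ^ (s + 1) * (1 - X)) * ((1 - X ^ (m + 2)) * Ts m (s + 1) 0) =
      (X ^ (s + 1) * (1 - X)) * (q * (1 - X ^ (m - (s + 1))) * (1 + X) ^ (s + 1)) := by
    linear_combination E' - q * (1 - X) * (1 + X) ^ (s + 1) * hxm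
  have E2 : (1 - X ^ (m + 2)) * Ts m (s + 1) 0 =
      q * (1 - X ^ (m - (s + 1))) * (1 + X) ^ (s + 1) :=
    mul_left_cancel₀ (mul_ne_zero (pow_ne_zero _ X_ne) one_sub_X_ne) hcan
  have hsj := Ts_split m (s + 1) j (by omega)
  have E1 : (1 + X) ^ (j + 1) * (1 - X ^ 2) * Fs m (s + 1) j =
      X * (1 - X ^ (j + 1)) * Ts m (s + 1) 0 := by
    linear_combination (1 + X) * Pj - Pj1 - ((1 + X) ^ (j + 1) * (1 - X ^ 2)) * hsj
  show Fs m (s + 1) j * (1 - X) * (1 - X ^ (m + 2)) * (1 + X) ^ (j + 2) = _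
  linear_combination (1 - X ^ (m + 2)) * E1 + X * (1 - X ^ (j + 1)) * E2
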